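/- Let p, m ∈ ℝ and a, b, c, x, y, z, λ ∈ 𝕆 satisfy the first two components of the right eigenvalue equation: a·y + conj(b)·z = x·(λ − p) and c·z + conj(a)·x = y·(λ − m). Then [a, y, λ] = x·((λ − p)·(λ − m) − |a|²) − (conj(b)·z)·(λ − m) − a·(c·z). -/

import Mathlib

noncomputable section

open Quaternion

/-- The octonions, realized as the Cayley–Dickson double of the real quaternions:
pairs of quaternions. -/
abbrev 𝕆 : Type := ℍ[ℝ] × ℍ[ℝ]

namespace Octonion

/-- Cayley–Dickson multiplication: `(a, b)·(c, d) = (a·c − conj(d)·b, d·a + b·conj(c))`. -/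
def omul (x y : 𝕆) : 𝕆 :=
  (x.1 * y.1 - star y.2 * x.2, y.2 * x.1 + x.2 * star y.1)

/-- Octonionic conjugation: `conj (a, b) = (conj a, −b)`. -/
def oconj (x : 𝕆) : 𝕆 := (star x.1, -x.2)

/-- The embedding of the reals, `r ↦ (r, 0)`. -/
def oR (r : ℝ) : 𝕆 := ((r : ℍ[ℝ]), 0)

/-- The unit octonion `1 = (1, 0)`. -/
def o1 : 𝕆 := oR 1

/-- The associator `[a,b,c] = (a·b)·c − a·(b·c)`. -/
def oassoc (a b c : 𝕆) : 𝕆 := omul (omul a b) c - omul a (omul b c)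

/-- The inner product: the real number with `(a·conj b + b·conj a)/2 = (a ⋅ b)·1`. -/
def odot (x y : 𝕆) : ℝ := (omul x (oconj y) + omul y (oconj x)).1.re / 2

/-- The squared norm `|x|²`, the real number with `x·conj x = |x|²·1`. -/
def onormSq (x : 𝕆) : ℝ := odot x x

/-- The real part of an octonion, as a real number. -/
def oreR (x : 𝕆) : ℝ := x.1.re

/-- The imaginary part `Im(x) = (x − conj x)/2`. -/
def oIm (x : 𝕆) : 𝕆 := (2:ℝ)⁻¹ • (x - oconj x)

/-- The imaginary units. -/
def oi : 𝕆 := (⟨0,1,0,0⟩, 0)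
def oj : 𝕆 := (⟨0,0,1,0⟩, 0)
def ok : 𝕆 := (⟨0,0,0,1⟩, 0)
def ol : 𝕆 := (0, 1)
def oil : 𝕆 := (0, ⟨0,1,0,0⟩)
def ojl : 𝕆 := (0, ⟨0,0,1,0⟩)
def okl : 𝕆 := (0, ⟨0,0,0,1⟩)

end Octonion


open Octonion

section Aux

private lemma aux_omul_sub_left (u v w : 𝕆) : omul (u - v) w = omul u w - omul v w := by
  simp only [omul, Prod.fst_sub, Prod.snd_sub, Prod.mk_sub_mk, Prod.mk.injEq]
  constructor <;> noncomm_ring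

private lemma aux_omul_add_right (u v w : 𝕆) : omul u (v + w) = omul u v + omul u w := by
  simp only [omul, Prod.fst_add, Prod.snd_add, Prod.mk_add_mk, Prod.mk.injEq, star_add]
  constructor <;> noncomm_ring

private lemma aux_omul_sub_right (u v w : 𝕆) : omul u (v - w) = omul u v - omul u w := by
  simp only [omul, Prod.fst_sub, Prod.snd_sub, Prod.mk_sub_mk, Prod.mk.injEq, star_sub]
  constructor <;> noncomm_ring

private lemma aux_shift (a y lam : 𝕆) (m : ℝ) :
    oassoc a y lam = omul (omul a y) (lam - oR m) - omul a (omul y (lam - oR m)) := by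
  obtain ⟨a1, a2⟩ := a; obtain ⟨y1, y2⟩ := y; obtain ⟨l1, l2⟩ := lam
  show Prod.mk (α := ℍ[ℝ]) (β := ℍ[ℝ]) _ _ = Prod.mk _ _
  rw [Prod.mk.injEq]
  simp only [oassoc, omul, oR, Prod.mk_sub_mk, Prod.fst, Prod.snd]
  constructor <;>
  · ext <;>
      simp only [Quaternion.re_mul, Quaternion.imI_mul, Quaternion.imJ_mul, Quaternion.imK_mul,
        Quaternion.re_add, Quaternion.imI_add, Quaternion.imJ_add, Quaternion.imK_add,
        Quaternion.re_sub, Quaternion.imI_sub, Quaternion.imJ_sub, Quaternion.imK_sub,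
        Quaternion.re_star, Quaternion.imI_star, Quaternion.imJ_star, Quaternion.imK_star,
        Quaternion.re_coe, Quaternion.imI_coe, Quaternion.imJ_coe, Quaternion.imK_coe,
        sub_zero, neg_zero, neg_neg, mul_zero, zero_mul, neg_sub] <;>
      ring

private lemma aux_alt (x l : 𝕆) (p m : ℝ) :
    omul (omul x (l - oR p)) (l - oR m) = omul x (omul (l - oR p) (l - oR m)) := by
  obtain ⟨x1, x2⟩ := x; obtain ⟨l1, l2⟩ := l
  show Prod.mk (α := ℍ[ℝ]) (β := ℍ[ℝ]) _ _ = Prod.mk _ _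
  rw [Prod.mk.injEq]
  simp only [omul, oR, Prod.mk_sub_mk, Prod.fst, Prod.snd]
  constructor <;>
  · ext <;>
      simp only [Quaternion.re_mul, Quaternion.imI_mul, Quaternion.imJ_mul, Quaternion.imK_mul,
        Quaternion.re_add, Quaternion.imI_add, Quaternion.imJ_add, Quaternion.imK_add,
        Quaternion.re_sub, Quaternion.imI_sub, Quaternion.imJ_sub, Quaternion.imK_sub,
        Quaternion.re_star, Quaternion.imI_star, Quaternion.imJ_star, Quaternion.imK_star,
        Quaternion.re_coe, Quaternion.imI_coe, Quaternion.imJ_coe, Quaternion.imK_coe,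
        sub_zero, neg_zero, neg_neg, mul_zero, zero_mul, neg_sub] <;>
      ring

private lemma aux_norm (a x : 𝕆) :
    omul a (omul (oconj a) x) = omul x (oR (onormSq a)) := by
  obtain ⟨a1, a2⟩ := a; obtain ⟨x1, x2⟩ := x
  show Prod.mk (α := ℍ[ℝ]) (β := ℍ[ℝ]) _ _ = Prod.mk _ _
  rw [Prod.mk.injEq]
  simp only [omul, oconj, onormSq, odot, oR, Prod.fst, Prod.snd, Prod.fst_add, Prod.snd_add]
  constructor <;>
  · ext <;>
      simp only [Quaternion.re_mul, Quaternion.imI_mul, Quaternion.imJ_mul, Quaternion.imK_mul,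
        Quaternion.re_add, Quaternion.imI_add, Quaternion.imJ_add, Quaternion.imK_add,
        Quaternion.re_sub, Quaternion.imI_sub, Quaternion.imJ_sub, Quaternion.imK_sub,
        Quaternion.re_neg, Quaternion.imI_neg, Quaternion.imJ_neg, Quaternion.imK_neg,
        Quaternion.re_zero, Quaternion.imI_zero, Quaternion.imJ_zero, Quaternion.imK_zero,
        Quaternion.re_star, Quaternion.imI_star, Quaternion.imJ_star, Quaternion.imK_star,
        Quaternion.re_coe, Quaternion.imI_coe, Quaternion.imJ_coe, Quaternion.imK_coe,
        sub_zero, neg_zero, neg_neg, mul_zero, zero_mul, neg_sub] <;>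
      ring

end Aux

/-- If `a·y + conj(b)·z = x·(λ−p)` and `c·z + conj(a)·x = y·(λ−m)`, then
`[a,y,λ] = x·((λ−p)·(λ−m) − |a|²) − (conj(b)·z)·(λ−m) − a·(c·z)`. -/
theorem assoc_a_y_lam (p m : ℝ) (a b c x y z lam : 𝕆)
    (h1 : omul a y + omul (oconj b) z = omul x (lam - oR p))
    (h2 : omul c z + omul (oconj a) x = omul y (lam - oR m)) :
    oassoc a y lam =
      omul x (omul (lam - oR p) (lam - oR m) - oR (onormSq a))
        - omul (omul (oconj b) z) (lam - oR m) - omul a (omul c z) := by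
  have hay : omul a y = omul x (lam - oR p) - omul (oconj b) z := by
    rw [← h1]; abel
  rw [aux_shift a y lam m, hay, ← h2, aux_omul_sub_left, aux_omul_add_right, aux_alt,
    aux_norm, aux_omul_sub_right x (omul (lam - oR p) (lam - oR m)) (oR (onormSq a))]
  abel
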